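/- Assume K is both a ℚ-algebra and an integral domain, χ is an ω-invariant sequence of characters, and E is a free K-module with finite basis. Let n = n₁+⋯+n_k with integers n_i ≥ 0 and set m_i = n₁+⋯+n_i (m₀ = 0). Then for all x₁,…,xₙ ∈ E and x₁*,…,xₙ* ∈ E* one has the Laplace expansions ⟨x₁χ⋯χxₙ, x₁*χ⋯χxₙ*⟩ = Σ_{ρ∈M(χ;n;n₁,…,n_k)} χₙ(ρ)·∏_{i=1}^k ⟨x_{ρ(m_{i−1}+1)}χ⋯χx_{ρ(m_i)}, x_{m_{i−1}+1}*χ⋯χx_{m_i}*⟩ and ⟨x₁χ⋯χxₙ, x₁*χ⋯χxₙ*⟩ = Σ_{ρ∈M(χ;n;n₁,…,n_k)} χₙ(ρ)·∏_{i=1}^k ⟨x_{m_{i−1}+1}χ⋯χx_{m_i}, x_{ρ(m_{i−1}+1)}*χ⋯χx_{ρ(m_i)}*⟩. -/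

import Mathlib

noncomputable section

open scoped TensorProduct DirectSum

/-- The subgroup of permutations of `ℕ` fixing every `n ≥ d`
(the symmetric group `S_d` inside `S_∞`, in 0-indexed form). -/
def Sfin (d : ℕ) : Subgroup (Equiv.Perm ℕ) where
  carrier := {σ | ∀ n, d ≤ n → σ n = n}
  one_mem' := fun _ _ => rfl
  mul_mem' := by
    intro a b ha hb n hn
    simp only [Equiv.Perm.mul_apply]
    rw [hb n hn, ha n hn]
  inv_mem' := by
    intro a ha n hn
    have h1 : a n = n := ha n hn
    calc a⁻¹ n = a⁻¹ (a n) := by rw [h1]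
    _ = n := by simp

/-- The shift `ω` of a finitary permutation of `ℕ`:
`(ω σ) 0 = 0` and `(ω σ) (m+1) = σ m + 1`. -/
def omegaPerm (σ : Equiv.Perm ℕ) : Equiv.Perm ℕ where
  toFun := fun n => match n with
    | 0 => 0
    | m + 1 => σ m + 1
  invFun := fun n => match n with
    | 0 => 0
    | m + 1 => σ⁻¹ m + 1
  left_inv := by
    intro n
    cases n with
    | zero => rfl
    | succ m => simp
  right_inv := by
    intro n
    cases n with
    | zero => rfl
    | succ m => simp

/-- `ω` as an (injective) monoid endomorphism of `S_∞`. -/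
def omegaHom : Equiv.Perm ℕ →* Equiv.Perm ℕ where
  toFun := omegaPerm
  map_one' := by
    ext n
    cases n <;> rfl
  map_mul' := by
    intro a b
    ext n
    cases n <;> rfl

/-- An `ω`-invariant sequence of `K`-valued linear characters
`χ_d : W_d → U(K)` on an `ω`-stable sequence of permutation groups
`W_d ≤ S_d` (indexed over all `d : ℕ`, 0-indexed). -/
structure OmegaSeq (K : Type*) [CommRing K] where
  W : ℕ → Subgroup (Equiv.Perm ℕ)
  W_le : ∀ d, W d ≤ Sfin d
  mono : ∀ d, W d ≤ W (d + 1)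
  omega_mem : ∀ d, ∀ σ ∈ W d, omegaHom σ ∈ W (d + 1)
  χ : ∀ d, W d →* Kˣ
  χ_res : ∀ d (σ : Equiv.Perm ℕ) (h : σ ∈ W d),
    χ (d + 1) ⟨σ, mono d h⟩ = χ d ⟨σ, h⟩
  χ_omega : ∀ d (σ : Equiv.Perm ℕ) (h : σ ∈ W d),
    χ (d + 1) ⟨omegaHom σ, omega_mem d σ h⟩ = χ d ⟨σ, h⟩

lemma Sfin.apply_lt {d : ℕ} {σ : Equiv.Perm ℕ} (h : σ ∈ Sfin d) {x : ℕ}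
    (hx : x < d) : σ x < d := by
  have h' : ∀ n, d ≤ n → σ n = n := h
  by_contra hge
  push_neg at hge
  have h1 : σ (σ x) = σ x := h' (σ x) hge
  have h2 : σ x = x := σ.injective h1
  rw [h2] at hge
  omega

/-- The restriction of a permutation `σ ∈ S_d ≤ S_∞` to a permutation
of `Fin d`. -/
def restrictFin {d : ℕ} (σ : Equiv.Perm ℕ) (h : σ ∈ Sfin d) :
    Equiv.Perm (Fin d) where
  toFun x := ⟨σ x, Sfin.apply_lt h x.2⟩
  invFun x := ⟨σ⁻¹ x, Sfin.apply_lt (inv_mem h) x.2⟩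
  left_inv x := by
    ext
    simp
  right_inv x := by
    ext
    simp

/-- The action of a permutation `σ` of `Fin d` on the `d`-th tensor power
`T^d(E)`, determined by `σ • (x₁ ⊗ ⋯ ⊗ x_d) = x_{σ⁻¹(1)} ⊗ ⋯ ⊗ x_{σ⁻¹(d)}`. -/
def permAct (K : Type*) [CommRing K] (E : Type*) [AddCommGroup E] [Module K E]
    (d : ℕ) (σ : Equiv.Perm (Fin d)) :
    (⨂[K] (_ : Fin d), E) ≃ₗ[K] ⨂[K] (_ : Fin d), E :=
  PiTensorProduct.reindex K (fun _ : Fin d => E) σ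

/-- The permutation of `Fin d` induced by `σ ∈ W_d`. -/
def rAct {K : Type*} [CommRing K] (S : OmegaSeq K) (d : ℕ) (σ : S.W d) :
    Equiv.Perm (Fin d) :=
  restrictFin (σ : Equiv.Perm ℕ) (S.W_le d σ.2)

/-- The submodule `_{χ_d⁻¹}T^d(E)` of `T^d(E)`, generated by the elements
`χ_d⁻¹(σ) z − σ z`, `σ ∈ W_d`. -/
def seqKer {K : Type*} [CommRing K] (S : OmegaSeq K)
    (E : Type*) [AddCommGroup E] [Module K E] (d : ℕ) :
    Submodule K (⨂[K] (_ : Fin d), E) :=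
  Submodule.span K {w | ∃ (σ : S.W d) (z : ⨂[K] (_ : Fin d), E),
    w = (((S.χ d σ)⁻¹ : Kˣ) : K) • z - permAct K E d (rAct S d σ) z}

/-- The `d`-th semi-symmetric power `[χ_d]^d(E) = T^d(E)/_{χ_d⁻¹}T^d(E)`. -/
abbrev Qpow {K : Type*} [CommRing K] (S : OmegaSeq K)
    (E : Type*) [AddCommGroup E] [Module K E] (d : ℕ) :=
  (⨂[K] (_ : Fin d), E) ⧸ seqKer S E d

/-- The semi-symmetric algebra `[χ](E) = ⨁_{d ≥ 0} [χ_d]^d(E)` of weight `χ`,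
as a graded `K`-module. -/
abbrev SemiAlg {K : Type*} [CommRing K] (S : OmegaSeq K)
    (E : Type*) [AddCommGroup E] [Module K E] :=
  ⨁ d : ℕ, Qpow S E d

/-- The decomposable `d-χ`-vector `x₁ χ ⋯ χ x_d` as an element of the
semi-symmetric algebra. -/
def decEl {K : Type*} [CommRing K] (S : OmegaSeq K)
    {E : Type*} [AddCommGroup E] [Module K E] (d : ℕ) (x : Fin d → E) :
    SemiAlg S E :=
  DirectSum.lof K ℕ (fun d => Qpow S E d) d
    (Submodule.Quotient.mk (PiTensorProduct.tprod K x))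

/-- Strict lexicographic comparison of functions. -/
def lexLT {ι : Type*} [LT ι] {α : Type*} [LT α] (f g : ι → α) : Prop :=
  Pi.Lex (· < ·) (fun {_} => (· < ·)) f g

/-- The `m`-th iterate of `ω` as a monoid endomorphism of `S_∞`. -/
def omegaPow : ℕ → (Equiv.Perm ℕ →* Equiv.Perm ℕ)
  | 0 => MonoidHom.id _
  | m + 1 => omegaHom.comp (omegaPow m)

/-- The offset `n₁ + ⋯ + n_{i-1}` of the `i`-th block of a composition. -/
def offset {k : ℕ} (c : Fin k → ℕ) (i : Fin k) : ℕ := ∑ i' ∈ Finset.Iio i, c i'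

/-- The subgroup `X(n₁,…,n_k) = W_{n₁} · ω^{n₁}(W_{n₂}) ⋯ ω^{n₁+⋯+n_{k−1}}(W_{n_k})`
of `W_n`. -/
def Xsub {K : Type*} [CommRing K] (S : OmegaSeq K) {k : ℕ} (c : Fin k → ℕ) :
    Subgroup (Equiv.Perm ℕ) :=
  ⨆ i : Fin k, (S.W (c i)).map (omegaPow (offset c i))

/-- The set `M(χ;n;n₁,…,n_k)` of lexicographically minimal representatives of
the left cosets of `W_n` modulo `X(n₁,…,n_k)`. -/
def MinRepSet {K : Type*} [CommRing K] (S : OmegaSeq K) (n : ℕ) {k : ℕ}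
    (c : Fin k → ℕ) : Set (Equiv.Perm ℕ) :=
  {σ | σ ∈ S.W n ∧ ∀ x ∈ Xsub S c, ¬ lexLT ⇑(σ * x) ⇑σ}

/-- The decomposable `d-χ`-vector `x₀ χ ⋯ χ x_{d-1}` built from the first `d`
terms of a sequence `x : ℕ → E`. -/
def elN {K : Type*} [CommRing K] (S : OmegaSeq K) {E : Type*} [AddCommGroup E]
    [Module K E] (d : ℕ) (x : ℕ → E) : SemiAlg S E :=
  decEl S d (fun t => x t)

/-- The value `d_{χ_d}^{W_d}((⟨x_i, x*_j⟩)_{i,j})` of the canonical pairing on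
a pair of decomposables of degree `d`. -/
def pairVal {K : Type*} [CommRing K] (S : OmegaSeq K) {E : Type*}
    [AddCommGroup E] [Module K E] (d : ℕ) (x : ℕ → E)
    (y : ℕ → Module.Dual K E) : K :=
  ∑ᶠ σ : S.W d, ((S.χ d σ : Kˣ) : K) *
    ∏ t ∈ Finset.range d, y t (x (((σ : Equiv.Perm ℕ))⁻¹ t))

/-- Concatenation (splice) of two sequences, the second starting at
position `d`. -/
def splice {E : Type*} (d : ℕ) (x y : ℕ → E) : ℕ → E :=
  fun t => if t < d then x t else y (t - d)

section Part1

open Equiv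

lemma omegaHom_apply (σ : Equiv.Perm ℕ) : omegaHom σ = omegaPerm σ := rfl

lemma omegaPerm_zero (σ : Equiv.Perm ℕ) : omegaPerm σ 0 = 0 := rfl

lemma omegaPerm_succ (σ : Equiv.Perm ℕ) (m : ℕ) : omegaPerm σ (m + 1) = σ m + 1 := rfl

lemma omegaPow_apply (m : ℕ) (σ : Equiv.Perm ℕ) (t : ℕ) :
    omegaPow m σ t = if t < m then t else σ (t - m) + m := by
  induction m generalizing t with
  | zero => simp [omegaPow]
  | succ m ih =>
    have : omegaPow (m+1) σ = omegaPerm (omegaPow m σ) := rfl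
    rw [this]
    cases t with
    | zero => simp [omegaPerm_zero]
    | succ u =>
      rw [omegaPerm_succ, ih u]
      by_cases h : u < m
      · simp [h, Nat.succ_lt_succ h]
      · have h2 : ¬ (u + 1 < m + 1) := by omega
        have h3 : u + 1 - (m + 1) = u - m := by omega
        rw [if_neg h2, if_neg h, h3]
        omega

lemma Sfin_mono {d e : ℕ} (h : d ≤ e) : Sfin d ≤ Sfin e := by
  intro σ hσ t ht
  exact hσ t (le_trans h ht)

lemma mem_Sfin_iff {d : ℕ} {σ : Equiv.Perm ℕ} : σ ∈ Sfin d ↔ ∀ t, d ≤ t → σ t = t :=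
  Iff.rfl

lemma omegaPow_mem_Sfin {e : ℕ} (m : ℕ) {σ : Equiv.Perm ℕ} (h : σ ∈ Sfin e) :
    omegaPow m σ ∈ Sfin (m + e) := by
  intro t ht
  rw [omegaPow_apply]
  have h1 : ¬ t < m := by omega
  rw [if_neg h1, h (t - m) (by omega)]
  omega

/-- points below `m` are fixed by `omegaPow m σ`. -/
lemma omegaPow_apply_lt {m t : ℕ} (σ : Equiv.Perm ℕ) (h : t < m) :
    omegaPow m σ t = t := by rw [omegaPow_apply, if_pos h]

lemma omegaPow_apply_ge {m t : ℕ} (σ : Equiv.Perm ℕ) (h : m ≤ t) :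
    omegaPow m σ t = σ (t - m) + m := by
  rw [omegaPow_apply, if_neg (by omega)]

lemma omegaPow_apply_add (σ : Equiv.Perm ℕ) (m t : ℕ) :
    omegaPow m σ (m + t) = m + σ t := by
  rw [omegaPow_apply_ge σ (Nat.le_add_right m t)]
  simp [Nat.add_sub_cancel_left]
  omega

section W
variable {K : Type*} [CommRing K] (S : OmegaSeq K)

lemma W_mono {d n : ℕ} (h : d ≤ n) : S.W d ≤ S.W n := by
  induction n with
  | zero => simp [Nat.le_zero.mp h]
  | succ n ih =>
    rcases Nat.lt_or_ge d (n+1) with h1 | h1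
    · exact le_trans (ih (by omega)) (S.mono n)
    · have : d = n + 1 := by omega
      subst this; exact le_refl _

lemma χ_mono {d n : ℕ} (h : d ≤ n) {σ : Equiv.Perm ℕ} (hσ : σ ∈ S.W d) :
    S.χ n ⟨σ, W_mono S h hσ⟩ = S.χ d ⟨σ, hσ⟩ := by
  induction n with
  | zero =>
    have : d = 0 := Nat.le_zero.mp h
    subst this; rfl
  | succ n ih =>
    rcases Nat.lt_or_ge d (n+1) with h1 | h1
    · have h2 : d ≤ n := by omega
      have := S.χ_res n σ (W_mono S h2 hσ)
      have h3 : (⟨σ, W_mono S h hσ⟩ : S.W (n+1)) = ⟨σ, S.mono n (W_mono S h2 hσ)⟩ := rfl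
      rw [h3, this, ih h2]
    · have : d = n + 1 := by omega
      subst this; rfl

lemma omegaPow_mem_W (m : ℕ) {d : ℕ} {σ : Equiv.Perm ℕ} (hσ : σ ∈ S.W d) :
    omegaPow m σ ∈ S.W (d + m) := by
  induction m with
  | zero => exact hσ
  | succ m ih =>
    have : omegaPow (m+1) σ = omegaHom (omegaPow m σ) := rfl
    rw [this]
    exact S.omega_mem (d + m) _ ih

lemma χ_omegaPow (m : ℕ) {d : ℕ} {σ : Equiv.Perm ℕ} (hσ : σ ∈ S.W d) :
    S.χ (d + m) ⟨omegaPow m σ, omegaPow_mem_W S m hσ⟩ = S.χ d ⟨σ, hσ⟩ := by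
  induction m with
  | zero => rfl
  | succ m ih =>
    have h1 : omegaPow (m+1) σ = omegaHom (omegaPow m σ) := rfl
    have h2 := S.χ_omega (d + m) (omegaPow m σ) (omegaPow_mem_W S m hσ)
    have h3 : (⟨omegaPow (m+1) σ, omegaPow_mem_W S (m+1) hσ⟩ : S.W (d+(m+1)))
        = ⟨omegaHom (omegaPow m σ), S.omega_mem (d+m) _ (omegaPow_mem_W S m hσ)⟩ := by
      simp [h1]
    rw [h3]
    exact h2.trans ih

/-- combined lift: if `off + e ≤ n` then `ω^off σ ∈ W n` with the same character value. -/
lemma chi_shift (off : ℕ) {e n : ℕ} (h : off + e ≤ n) {σ : Equiv.Perm ℕ} (hσ : σ ∈ S.W e) :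
    ∃ h' : omegaPow off σ ∈ S.W n, S.χ n ⟨omegaPow off σ, h'⟩ = S.χ e ⟨σ, hσ⟩ := by
  have h1 : omegaPow off σ ∈ S.W (e + off) := omegaPow_mem_W S off hσ
  have h2 : e + off ≤ n := by omega
  refine ⟨W_mono S h2 h1, ?_⟩
  rw [χ_mono S h2 h1, χ_omegaPow S off hσ]

lemma finite_W (d : ℕ) : Finite (S.W d) := by
  have : Function.Injective (fun σ : S.W d => restrictFin σ.1 (S.W_le d σ.2)) := by
    intro σ τ h
    ext t
    rcases Nat.lt_or_ge t d with ht | ht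
    · have := congrArg (fun e => (e ⟨t, ht⟩ : Fin d).1) h
      exact this
    · rw [S.W_le d σ.2 t ht, S.W_le d τ.2 t ht]
  exact Finite.of_injective _ this

end W

end Part1
section Part2

lemma lexLT_iff (f g : ℕ → ℕ) :
    lexLT f g ↔ ∃ i, (∀ j, j < i → f j = g j) ∧ f i < g i := Iff.rfl

lemma lexLT_trans {f g h : ℕ → ℕ} (h1 : lexLT f g) (h2 : lexLT g h) : lexLT f h := by
  obtain ⟨i1, hp1, hl1⟩ := h1
  obtain ⟨i2, hp2, hl2⟩ := h2
  rcases Nat.lt_trichotomy i1 i2 with hc | hc | hc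
  · exact ⟨i1, fun j hj => (hp1 j hj).trans (hp2 j (by omega)), by
      rw [← hp2 i1 hc]; exact hl1⟩
  · subst hc
    exact ⟨i1, fun j hj => (hp1 j hj).trans (hp2 j hj), lt_trans hl1 hl2⟩
  · exact ⟨i2, fun j hj => (hp1 j (by omega)).trans (hp2 j hj), by
      rw [hp1 i2 hc]; exact hl2⟩

lemma lexLT_irrefl (f : ℕ → ℕ) : ¬ lexLT f f := by
  rintro ⟨i, -, hl⟩
  exact lt_irrefl _ hl

lemma lexLT_asymm {f g : ℕ → ℕ} (h1 : lexLT f g) : ¬ lexLT g f := fun h2 =>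
  lexLT_irrefl f (lexLT_trans h1 h2)

lemma lexLT_total {f g : ℕ → ℕ} (h : f ≠ g) : lexLT f g ∨ lexLT g f := by
  have hne : ∃ i, f i ≠ g i := by
    by_contra hx
    push_neg at hx
    exact h (funext hx)
  classical
  have hi : f (Nat.find hne) ≠ g (Nat.find hne) := Nat.find_spec hne
  have hpre : ∀ j, j < Nat.find hne → f j = g j := by
    intro j hj
    by_contra hx
    have h2 : Nat.find hne ≤ j := Nat.find_le hx
    omega
  rcases Nat.lt_or_ge (f (Nat.find hne)) (g (Nat.find hne)) with hc | hc
  · exact Or.inl ⟨Nat.find hne, hpre, hc⟩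
  · have : g (Nat.find hne) < f (Nat.find hne) := by omega
    exact Or.inr ⟨Nat.find hne, fun j hj => (hpre j hj).symm, this⟩

lemma perm_coe_ne {a b : Equiv.Perm ℕ} (h : a ≠ b) : (⇑a : ℕ → ℕ) ≠ ⇑b := by
  intro hx
  exact h (Equiv.coe_fn_injective hx)

lemma exists_lex_min (s : Finset (Equiv.Perm ℕ)) (hs : s.Nonempty) :
    ∃ m ∈ s, ∀ z ∈ s, z ≠ m → lexLT ⇑m ⇑z := by
  classical
  induction s using Finset.induction_on with
  | empty => exact absurd hs (by simp)
  | insert a s hnotmem ih =>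
    rcases s.eq_empty_or_nonempty with rfl | hs'
    · refine ⟨a, by simp, ?_⟩
      intro z hz hzne
      simp only [Finset.mem_insert, Finset.notMem_empty, or_false] at hz
      exact absurd hz hzne
    · obtain ⟨m, hm, hmin⟩ := ih hs'
      by_cases ham : a = m
      · subst ham
        refine ⟨a, by simp [hm], ?_⟩
        intro z hz hzne
        rcases Finset.mem_insert.mp hz with rfl | hz'
        · exact absurd rfl hzne
        · exact hmin z hz' hzne
      · rcases lexLT_total (perm_coe_ne ham) with hc | hc
        · refine ⟨a, by simp, ?_⟩
          intro z hz hzne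
          rcases Finset.mem_insert.mp hz with rfl | hz'
          · exact absurd rfl hzne
          · by_cases hzm : z = m
            · subst hzm; exact hc
            · exact lexLT_trans hc (hmin z hz' hzm)
        · refine ⟨m, by simp [hm], ?_⟩
          intro z hz hzne
          rcases Finset.mem_insert.mp hz with rfl | hz'
          · exact hc
          · exact hmin z hz' hzne

end Part2
section Part3

variable {k n : ℕ} {c : Fin k → ℕ}

lemma offset_add_le (hc : ∑ i, c i = n) (i : Fin k) : offset c i + c i ≤ n := by
  classical
  have hsub : insert i (Finset.Iio i) ⊆ Finset.univ := Finset.subset_univ _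
  have h1 : ∑ x ∈ insert i (Finset.Iio i), c x ≤ ∑ x, c x :=
    Finset.sum_le_sum_of_subset hsub
  rw [Finset.sum_insert (by simp)] at h1
  have ho : offset c i = ∑ x ∈ Finset.Iio i, c x := rfl
  omega

lemma offset_lt_offset (hij : i < j) : offset c i + c i ≤ offset c j := by
  classical
  have hsub : insert i (Finset.Iio i) ⊆ Finset.Iio j := by
    intro x hx
    rcases Finset.mem_insert.mp hx with rfl | hx'
    · exact Finset.mem_Iio.mpr hij
    · exact Finset.mem_Iio.mpr (lt_trans (Finset.mem_Iio.mp hx') hij)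
  have h1 : ∑ x ∈ insert i (Finset.Iio i), c x ≤ ∑ x ∈ Finset.Iio j, c x :=
    Finset.sum_le_sum_of_subset hsub
  rw [Finset.sum_insert (by simp)] at h1
  unfold offset
  omega

lemma exists_block (hc : ∑ i, c i = n) {u : ℕ} (hu : u < n) :
    ∃ i, offset c i ≤ u ∧ u < offset c i + c i := by
  classical
  have hk : 0 < k := by
    by_contra hx
    push_neg at hx
    interval_cases k
    · simp at hc; omega
  set T := Finset.univ.filter (fun i : Fin k => offset c i ≤ u) with hTdef
  have hT : T.Nonempty := by
    refine ⟨⟨0, hk⟩, ?_⟩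
    simp only [hTdef, Finset.mem_filter, Finset.mem_univ, true_and]
    have : Finset.Iio (⟨0, hk⟩ : Fin k) = ∅ := by
      ext j
      simp [Fin.lt_def]
    simp [offset, this]
  set i := T.max' hT with hidef
  have hi : offset c i ≤ u := (Finset.mem_filter.mp (T.max'_mem hT)).2
  refine ⟨i, hi, ?_⟩
  by_contra hx
  push_neg at hx
  by_cases h : i.val + 1 < k
  · set j : Fin k := ⟨i.val + 1, h⟩ with hjdef
    have hIio : Finset.Iio j = insert i (Finset.Iio i) := by
      ext x
      simp only [Finset.mem_Iio, Finset.mem_insert, Fin.lt_def, hjdef]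
      constructor
      · intro hxx
        rcases Nat.lt_or_ge x.val i.val with h2 | h2
        · exact Or.inr h2
        · exact Or.inl (Fin.ext (by omega))
      · rintro (rfl | h2) <;> simp_all <;> omega
    have hoffj : offset c j = offset c i + c i := by
      unfold offset
      rw [hIio, Finset.sum_insert (by simp)]
      omega
    have hjT : j ∈ T := by
      simp only [hTdef, Finset.mem_filter, Finset.mem_univ, true_and, hoffj]
      omega
    have hle : j ≤ i := Finset.le_max' T j hjT
    have hle2 : j.val ≤ i.val := hle
    have hj1 : j.val = i.val + 1 := rfl
    omega
  · have huniv : (Finset.univ : Finset (Fin k)) = insert i (Finset.Iio i) := by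
      ext x
      simp only [Finset.mem_univ, Finset.mem_insert, Finset.mem_Iio, Fin.lt_def, true_iff]
      have hx2 : x.val < k := x.2
      rcases Nat.lt_or_ge x.val i.val with h2 | h2
      · exact Or.inr h2
      · exact Or.inl (Fin.ext (by omega))
    have : n = c i + offset c i := by
      rw [← hc, huniv, Finset.sum_insert (by simp)]; rfl
    omega

lemma block_unique (hc : ∑ i, c i = n) {u : ℕ} {i j : Fin k}
    (hi : offset c i ≤ u ∧ u < offset c i + c i)
    (hj : offset c j ≤ u ∧ u < offset c j + c j) : i = j := by
  rcases lt_trichotomy i j with hij | hij | hij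
  · have := offset_lt_offset (c := c) hij; omega
  · exact hij
  · have := offset_lt_offset (c := c) hij; omega

lemma prod_blocks {M : Type*} [CommMonoid M] (hc : ∑ i, c i = n) (f : ℕ → M) :
    ∏ u ∈ Finset.range n, f u = ∏ i, ∏ t ∈ Finset.range (c i), f (offset c i + t) := by
  classical
  have heq : Finset.range n =
      Finset.univ.biUnion
        (fun i : Fin k => (Finset.range (c i)).image (fun t => offset c i + t)) := by
    ext u
    simp only [Finset.mem_range, Finset.mem_biUnion, Finset.mem_univ, true_and,
      Finset.mem_image]
    constructor
    · intro hu
      obtain ⟨i, h1, h2⟩ := exists_block hc hu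
      exact ⟨i, u - offset c i, by omega, by omega⟩
    · rintro ⟨i, t, ht, rfl⟩
      have := offset_add_le hc i
      omega
  have hdisj : ((Finset.univ : Finset (Fin k)) : Set (Fin k)).PairwiseDisjoint
      (fun i : Fin k => (Finset.range (c i)).image (fun t => offset c i + t)) := by
    intro i _ j _ hij
    simp only [Function.onFun]
    rw [Finset.disjoint_left]
    intro a hai haj
    obtain ⟨t1, ht1, he1⟩ := Finset.mem_image.mp hai
    obtain ⟨t2, ht2, he2⟩ := Finset.mem_image.mp haj
    rw [Finset.mem_range] at ht1 ht2
    exact hij (block_unique hc (u := a) ⟨by omega, by omega⟩ ⟨by omega, by omega⟩)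
  rw [heq, Finset.prod_biUnion hdisj]
  refine Finset.prod_congr rfl ?_
  intro i _
  rw [Finset.prod_image]
  intro a _ b _ hab
  simp only at hab
  omega

lemma prod_range_perm {M : Type*} [CommMonoid M] (f : ℕ → M) {ρ : Equiv.Perm ℕ}
    (hρ : ρ ∈ Sfin n) :
    ∏ u ∈ Finset.range n, f (ρ u) = ∏ u ∈ Finset.range n, f u := by
  refine Finset.prod_nbij' (fun u => ρ u) (fun v => ρ⁻¹ v) ?_ ?_ ?_ ?_ ?_
  · intro a ha
    exact Finset.mem_range.mpr (Sfin.apply_lt hρ (Finset.mem_range.mp ha))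
  · intro a ha
    exact Finset.mem_range.mpr (Sfin.apply_lt (inv_mem hρ) (Finset.mem_range.mp ha))
  · intro a _; simp
  · intro a _; simp
  · intro a _; rfl

end Part3
section Part4

variable {K : Type*} [CommRing K]

/-- the embedding of the `i`-th block group, shifted by the offset. -/
def phiB (S : OmegaSeq K) {k : ℕ} (c : Fin k → ℕ) (i : Fin k) :
    S.W (c i) →* Equiv.Perm ℕ :=
  (omegaPow (offset c i)).comp (S.W (c i)).subtype

lemma phiB_apply_fix (S : OmegaSeq K) {k : ℕ} (c : Fin k → ℕ) (i : Fin k)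
    (x : S.W (c i)) {t : ℕ} (ht : t < offset c i ∨ offset c i + c i ≤ t) :
    phiB S c i x t = t := by
  rcases ht with ht | ht
  · exact omegaPow_apply_lt _ ht
  · show omegaPow (offset c i) x.1 t = t
    rw [omegaPow_apply_ge _ (by omega)]
    have := S.W_le (c i) x.2 (t - offset c i) (by omega)
    omega

lemma phiB_apply_add (S : OmegaSeq K) {k : ℕ} (c : Fin k → ℕ) (i : Fin k)
    (x : S.W (c i)) (t : ℕ) :
    phiB S c i x (offset c i + t) = offset c i + x.1 t :=
  omegaPow_apply_add _ _ _

lemma phiB_block {k : ℕ} {c : Fin k → ℕ} {i : Fin k} {u : ℕ}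
    (ht : offset c i ≤ u) (ht2 : u < offset c i + c i) {j : Fin k} (hij : j ≠ i) :
    u < offset c j ∨ offset c j + c j ≤ u := by
  rcases lt_trichotomy j i with h | h | h
  · have := offset_lt_offset (c := c) h
    omega
  · exact absurd h hij
  · have := offset_lt_offset (c := c) h
    omega

lemma phiB_commute (S : OmegaSeq K) {k : ℕ} (c : Fin k → ℕ) :
    Pairwise fun i j => ∀ (x : S.W (c i)) (y : S.W (c j)),
      Commute (phiB S c i x) (phiB S c j y) := by
  intro i j hij x y
  apply Equiv.Perm.Disjoint.commute
  intro u
  by_cases hu : offset c i ≤ u ∧ u < offset c i + c i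
  · right
    exact phiB_apply_fix S c j y (phiB_block hu.1 hu.2 (Ne.symm hij))
  · left
    apply phiB_apply_fix S c i x
    omega

/-- `Ψ : Π W_{c i} →* S_∞`, the product of the shifted block subgroups. -/
def PsiHom (S : OmegaSeq K) {k : ℕ} (c : Fin k → ℕ) :
    (∀ i, S.W (c i)) →* Equiv.Perm ℕ :=
  MonoidHom.noncommPiCoprod (phiB S c) (phiB_commute S c)

lemma PsiHom_apply_block (S : OmegaSeq K) {k : ℕ} (c : Fin k → ℕ)
    (s : ∀ i, S.W (c i)) {i : Fin k} {t : ℕ} (ht : t < c i) :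
    PsiHom S c s (offset c i + t) = offset c i + (s i).1 t := by
  classical
  have key : ∀ T : Finset (Fin k),
      ∀ hT : (T : Set (Fin k)).Pairwise fun a b => Commute (phiB S c a (s a)) (phiB S c b (s b)),
      (T.noncommProd (fun j => phiB S c j (s j)) hT) (offset c i + t)
        = if i ∈ T then offset c i + (s i).1 t else offset c i + t := by
    intro T
    induction T using Finset.induction_on with
    | empty => intro hT; simp
    | insert a T hnotmem ih =>
      intro hT
      rw [Finset.noncommProd_insert_of_notMem _ _ _ _ hnotmem]
      have hT' : (T : Set (Fin k)).Pairwise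
          fun a b => Commute (phiB S c a (s a)) (phiB S c b (s b)) :=
        hT.mono (by simp)
      have hin := ih hT'
      rw [Equiv.Perm.mul_apply, hin]
      by_cases hia : i = a
      · subst hia
        rw [if_neg hnotmem, if_pos (Finset.mem_insert_self i T), phiB_apply_add]
      · have hsi : (s i).1 t < c i := Sfin.apply_lt (S.W_le (c i) (s i).2) ht
        by_cases hiT : i ∈ T
        · rw [if_pos hiT, if_pos (Finset.mem_insert.mpr (Or.inr hiT))]
          exact phiB_apply_fix S c a (s a)
            (phiB_block (Nat.le_add_right _ _) (by omega) (fun h => hia h.symm))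
        · rw [if_neg hiT, if_neg (by simp [hia, hiT])]
          exact phiB_apply_fix S c a (s a)
            (phiB_block (Nat.le_add_right _ _) (by omega) (fun h => hia h.symm))
  have h2 := key Finset.univ (fun a _ b _ hab => phiB_commute S c hab (s a) (s b))
  simp only [Finset.mem_univ, if_true] at h2
  exact h2

lemma PsiHom_eq_ncp (S : OmegaSeq K) {k : ℕ} (c : Fin k → ℕ) (s : ∀ i, S.W (c i)) :
    PsiHom S c s = Finset.univ.noncommProd (fun j => phiB S c j (s j))
      (fun a _ b _ hab => phiB_commute S c hab (s a) (s b)) := rfl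

lemma PsiHom_mem (S : OmegaSeq K) {k n : ℕ} {c : Fin k → ℕ} (hc : ∑ i, c i = n)
    (s : ∀ i, S.W (c i)) : PsiHom S c s ∈ S.W n := by
  rw [PsiHom_eq_ncp]
  apply Subgroup.noncommProd_mem
  intro j _
  have h1 : offset c j + c j ≤ n := offset_add_le hc j
  exact (chi_shift S (offset c j) h1 (s j).2).1

lemma PsiHom_inj (S : OmegaSeq K) {k : ℕ} (c : Fin k → ℕ) :
    Function.Injective (PsiHom S c) := by
  intro s s' h
  funext i
  apply Subtype.ext
  apply Equiv.ext
  intro t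
  rcases Nat.lt_or_ge t (c i) with ht | ht
  · have h1 := PsiHom_apply_block S c s (i := i) ht
    have h2 := PsiHom_apply_block S c s' (i := i) ht
    rw [h] at h1
    omega
  · rw [S.W_le (c i) (s i).2 t ht, S.W_le (c i) (s' i).2 t ht]

lemma PsiHom_range (S : OmegaSeq K) {k : ℕ} (c : Fin k → ℕ) :
    (PsiHom S c).range = Xsub S c := by
  unfold PsiHom Xsub
  rw [MonoidHom.noncommPiCoprod_range]
  congr 1
  funext i
  ext x
  constructor
  · rintro ⟨y, rfl⟩
    exact ⟨y.1, y.2, rfl⟩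
  · rintro ⟨g, hg, rfl⟩
    exact ⟨⟨g, hg⟩, rfl⟩

/-- the product-of-characters homomorphism on `Π W_{c i}`. -/
def chiProd (S : OmegaSeq K) {k : ℕ} (c : Fin k → ℕ) : (∀ i, S.W (c i)) →* Kˣ where
  toFun s := ∏ i, S.χ (c i) (s i)
  map_one' := by simp
  map_mul' s s' := by
    simp only [Pi.mul_apply, map_mul]
    rw [Finset.prod_mul_distrib]

lemma chi_ncp (S : OmegaSeq K) {k n : ℕ} {c : Fin k → ℕ} (hc : ∑ i, c i = n)
    (s : ∀ i, S.W (c i)) (T : Finset (Fin k))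
    (hT : (T : Set (Fin k)).Pairwise fun a b => Commute (phiB S c a (s a)) (phiB S c b (s b)))
    (hmem : T.noncommProd (fun j => phiB S c j (s j)) hT ∈ S.W n) :
    S.χ n ⟨_, hmem⟩ = ∏ i ∈ T, S.χ (c i) (s i) := by
  classical
  induction T using Finset.induction_on with
  | empty =>
    have h1 : (⟨_, hmem⟩ : S.W n) = 1 := by
      apply Subtype.ext
      show Finset.noncommProd ∅ (fun j => phiB S c j (s j)) hT = (1 : Equiv.Perm ℕ)
      exact Finset.noncommProd_empty _ _
    rw [h1, map_one, Finset.prod_empty]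
  | insert a T hnotmem ih =>
    have hT' : (T : Set (Fin k)).Pairwise
        fun a b => Commute (phiB S c a (s a)) (phiB S c b (s b)) := hT.mono (by simp)
    have hmem2 : T.noncommProd (fun j => phiB S c j (s j)) hT' ∈ S.W n := by
      apply Subgroup.noncommProd_mem
      intro j _
      exact (chi_shift S (offset c j) (offset_add_le hc j) (s j).2).1
    have hmem1 : phiB S c a (s a) ∈ S.W n :=
      (chi_shift S (offset c a) (offset_add_le hc a) (s a).2).1
    have h1 : (⟨_, hmem⟩ : S.W n) = ⟨phiB S c a (s a), hmem1⟩ * ⟨_, hmem2⟩ := by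
      apply Subtype.ext
      show (insert a T).noncommProd (fun j => phiB S c j (s j)) hT = _
      exact Finset.noncommProd_insert_of_notMem T a _ hT hnotmem
    rw [h1, map_mul, ih hT' hmem2, Finset.prod_insert hnotmem]
    congr 1
    exact (chi_shift S (offset c a) (offset_add_le hc a) (s a).2).2

lemma chi_PsiHom (S : OmegaSeq K) {k n : ℕ} {c : Fin k → ℕ} (hc : ∑ i, c i = n)
    (s : ∀ i, S.W (c i)) :
    S.χ n ⟨PsiHom S c s, PsiHom_mem S hc s⟩ = ∏ i, S.χ (c i) (s i) := by
  have := chi_ncp S hc s Finset.univ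
    (fun a _ b _ hab => phiB_commute S c hab (s a) (s b)) (by
      rw [← PsiHom_eq_ncp]; exact PsiHom_mem S hc s)
  rw [← this]
  congr 1

end Part4
section Part5

variable {K : Type*} [CommRing K]

noncomputable instance instWFintype (S : OmegaSeq K) (d : ℕ) : Fintype (S.W d) :=
  @Fintype.ofFinite _ (finite_W S d)

variable (S : OmegaSeq K) {k n : ℕ} {c : Fin k → ℕ}

/-- the multiplication map `M × Π W_{c i} → W_n`. -/
def theMap (hc : ∑ i, c i = n)
    (p : {ρ : S.W n // (ρ : Equiv.Perm ℕ) ∈ MinRepSet S n c} × ∀ i, S.W (c i)) : S.W n :=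
  p.1.1 * ⟨PsiHom S c p.2, PsiHom_mem S hc p.2⟩

lemma minrep_eq (hc : ∑ i, c i = n) {ρ₁ ρ₂ : S.W n}
    (h₁ : (ρ₁ : Equiv.Perm ℕ) ∈ MinRepSet S n c)
    (h₂ : (ρ₂ : Equiv.Perm ℕ) ∈ MinRepSet S n c)
    (s : ∀ i, S.W (c i)) (hrel : (ρ₁ : Equiv.Perm ℕ) = ρ₂ * PsiHom S c s) : ρ₁ = ρ₂ := by
  by_contra hne
  have hne2 : (ρ₁ : Equiv.Perm ℕ) ≠ (ρ₂ : Equiv.Perm ℕ) := by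
    intro h; exact hne (Subtype.ext h)
  have hx : PsiHom S c s ∈ Xsub S c := by
    rw [← PsiHom_range]; exact ⟨s, rfl⟩
  have hxinv : (PsiHom S c s)⁻¹ ∈ Xsub S c := inv_mem hx
  rcases lexLT_total (perm_coe_ne hne2) with hlt | hlt
  · refine h₂.2 (PsiHom S c s) hx ?_
    rw [← hrel]
    exact hlt
  · refine h₁.2 (PsiHom S c s)⁻¹ hxinv ?_
    have : (ρ₁ : Equiv.Perm ℕ) * (PsiHom S c s)⁻¹ = ρ₂ := by
      rw [hrel]; group
    rw [this]
    exact hlt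

lemma exists_minrep (hc : ∑ i, c i = n) (σ : S.W n) :
    ∃ (ρ : S.W n) (s : ∀ i, S.W (c i)),
      (ρ : Equiv.Perm ℕ) ∈ MinRepSet S n c ∧
        σ = ρ * ⟨PsiHom S c s, PsiHom_mem S hc s⟩ := by
  classical
  set CFin : Finset (Equiv.Perm ℕ) :=
    Finset.image (fun s : ∀ i, S.W (c i) => (σ : Equiv.Perm ℕ) * PsiHom S c s) Finset.univ
    with hCdef
  have hCne : CFin.Nonempty := ⟨_, Finset.mem_image.mpr ⟨1, Finset.mem_univ 1, rfl⟩⟩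
  obtain ⟨m, hm, hleast⟩ := exists_lex_min CFin hCne
  obtain ⟨s₀, -, hs₀⟩ := Finset.mem_image.mp hm
  have hmmem : m ∈ S.W n := by
    rw [← hs₀]; exact mul_mem σ.2 (PsiHom_mem S hc s₀)
  have hMin : m ∈ MinRepSet S n c := by
    refine ⟨hmmem, ?_⟩
    intro x hx
    rw [← PsiHom_range] at hx
    obtain ⟨s, rfl⟩ := hx
    have hmx : m * PsiHom S c s ∈ CFin := by
      rw [← hs₀, mul_assoc, ← map_mul]
      exact Finset.mem_image.mpr ⟨s₀ * s, Finset.mem_univ _, rfl⟩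
    by_cases he : m * PsiHom S c s = m
    · rw [he]; exact lexLT_irrefl _
    · exact lexLT_asymm (hleast _ hmx he)
  refine ⟨⟨m, hmmem⟩, s₀⁻¹, hMin, ?_⟩
  apply Subtype.ext
  show (σ : Equiv.Perm ℕ) = m * PsiHom S c s₀⁻¹
  rw [map_inv, ← hs₀]
  group

lemma theMap_bijective (hc : ∑ i, c i = n) : Function.Bijective (theMap S hc) := by
  constructor
  · rintro ⟨⟨ρ₁, h₁⟩, s₁⟩ ⟨⟨ρ₂, h₂⟩, s₂⟩ he
    have he' : (ρ₁ : Equiv.Perm ℕ) * PsiHom S c s₁ = (ρ₂ : Equiv.Perm ℕ) * PsiHom S c s₂ :=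
      congrArg (fun z : S.W n => (z : Equiv.Perm ℕ)) he
    have hrel : (ρ₁ : Equiv.Perm ℕ) = (ρ₂ : Equiv.Perm ℕ) * PsiHom S c (s₂ * s₁⁻¹) := by
      rw [map_mul, map_inv, ← mul_assoc, ← he', mul_assoc, mul_inv_cancel, mul_one]
    have hρ : ρ₁ = ρ₂ := minrep_eq S hc h₁ h₂ _ hrel
    have hρ' : (ρ₁ : Equiv.Perm ℕ) = (ρ₂ : Equiv.Perm ℕ) := congrArg _ hρ
    rw [hρ'] at he'
    have h4 : PsiHom S c s₁ = PsiHom S c s₂ := mul_left_cancel he'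
    have h6 := PsiHom_inj S c h4
    simp only [Prod.mk.injEq, Subtype.mk.injEq]
    exact ⟨hρ, h6⟩
  · intro σ
    obtain ⟨ρ, s, hmin, heq⟩ := exists_minrep S hc σ
    refine ⟨⟨⟨ρ, hmin⟩, s⟩, ?_⟩
    show ρ * ⟨PsiHom S c s, PsiHom_mem S hc s⟩ = σ
    exact heq.symm

end Part5
section Part6

variable {K : Type*} [CommRing K] (S : OmegaSeq K) {k n : ℕ} {c : Fin k → ℕ}

open Classical in
lemma core_regroup (hc : ∑ i, c i = n) (G : S.W n → K) :
    ∑ σ : S.W n, G σ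
      = ∑ ρ : S.W n, (if (ρ : Equiv.Perm ℕ) ∈ MinRepSet S n c then
          ∑ s : ∀ i, S.W (c i), G (ρ * ⟨PsiHom S c s, PsiHom_mem S hc s⟩) else 0) := by
  classical
  symm
  calc ∑ ρ : S.W n, (if (ρ : Equiv.Perm ℕ) ∈ MinRepSet S n c then
          ∑ s : ∀ i, S.W (c i), G (ρ * ⟨PsiHom S c s, PsiHom_mem S hc s⟩) else 0)
      = ∑ ρ ∈ Finset.univ.filter (fun ρ : S.W n => (ρ : Equiv.Perm ℕ) ∈ MinRepSet S n c),
          ∑ s : ∀ i, S.W (c i), G (ρ * ⟨PsiHom S c s, PsiHom_mem S hc s⟩) :=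
        (Finset.sum_filter _ _).symm
    _ = ∑ ρ : {ρ : S.W n // (ρ : Equiv.Perm ℕ) ∈ MinRepSet S n c},
          ∑ s : ∀ i, S.W (c i), G (ρ.1 * ⟨PsiHom S c s, PsiHom_mem S hc s⟩) :=
        Finset.sum_subtype _ (by simp) _
    _ = ∑ p : {ρ : S.W n // (ρ : Equiv.Perm ℕ) ∈ MinRepSet S n c} × (∀ i, S.W (c i)),
          G (theMap S hc p) := by
        rw [Fintype.sum_prod_type]
        rfl
    _ = ∑ σ : S.W n, G σ :=
        Fintype.sum_bijective (theMap S hc) (theMap_bijective S hc) _ _ (fun p => rfl)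

open Classical in
lemma core_regroup' (hc : ∑ i, c i = n) (G : S.W n → K) :
    ∑ σ : S.W n, G σ
      = ∑ ρ : S.W n, (if (ρ : Equiv.Perm ℕ) ∈ MinRepSet S n c then
          ∑ s : ∀ i, S.W (c i), G (⟨PsiHom S c s, PsiHom_mem S hc s⟩ * ρ⁻¹) else 0) := by
  classical
  have h0 : ∑ σ : S.W n, G σ = ∑ σ : S.W n, G σ⁻¹ :=
    (Fintype.sum_bijective (fun σ : S.W n => σ⁻¹) (inv_involutive.bijective) _ _
      (fun σ => rfl)).symm
  rw [h0, core_regroup S hc (fun σ => G σ⁻¹)]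
  apply Finset.sum_congr rfl
  intro ρ _
  split_ifs with hM
  · refine Fintype.sum_bijective (fun s : ∀ i, S.W (c i) => s⁻¹) (inv_involutive.bijective) _ _
      (fun s => ?_)
    congr 1
    apply Subtype.ext
    show ((ρ * ⟨PsiHom S c s, _⟩ : S.W n) : Equiv.Perm ℕ)⁻¹
        = PsiHom S c s⁻¹ * ((ρ : Equiv.Perm ℕ))⁻¹
    rw [map_inv]
    show ((ρ : Equiv.Perm ℕ) * PsiHom S c s)⁻¹ = (PsiHom S c s)⁻¹ * ((ρ : Equiv.Perm ℕ))⁻¹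
    rw [mul_inv_rev]
  · rfl

lemma blockprod_eq (hc : ∑ i, c i = n) (F : ℕ → ℕ → K) (ρ : S.W n) (s : ∀ i, S.W (c i)) :
    ∏ t ∈ Finset.range n, F t ((((ρ : Equiv.Perm ℕ) * PsiHom S c s))⁻¹ t)
      = ∏ i, ∏ t ∈ Finset.range (c i),
          F ((ρ : Equiv.Perm ℕ) (offset c i + t)) (offset c i + ((s i : Equiv.Perm ℕ))⁻¹ t) := by
  have h1 : ∀ t, (((ρ : Equiv.Perm ℕ) * PsiHom S c s))⁻¹ t
      = (PsiHom S c s)⁻¹ (((ρ : Equiv.Perm ℕ))⁻¹ t) := by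
    intro t
    rw [mul_inv_rev, Equiv.Perm.mul_apply]
  simp only [h1]
  rw [← prod_range_perm (fun t => F t ((PsiHom S c s)⁻¹ (((ρ : Equiv.Perm ℕ))⁻¹ t)))
    (S.W_le n ρ.2)]
  have h2 : ∀ u, F ((ρ : Equiv.Perm ℕ) u)
      ((PsiHom S c s)⁻¹ (((ρ : Equiv.Perm ℕ))⁻¹ ((ρ : Equiv.Perm ℕ) u)))
      = F ((ρ : Equiv.Perm ℕ) u) ((PsiHom S c s)⁻¹ u) := by
    intro u
    rw [Equiv.Perm.inv_def (ρ : Equiv.Perm ℕ), Equiv.symm_apply_apply]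
  simp only [h2]
  rw [prod_blocks hc (fun u => F ((ρ : Equiv.Perm ℕ) u) ((PsiHom S c s)⁻¹ u))]
  refine Finset.prod_congr rfl (fun i _ => Finset.prod_congr rfl (fun t ht => ?_))
  congr 1
  have h3 : (PsiHom S c s)⁻¹ = PsiHom S c s⁻¹ := (map_inv _ _).symm
  rw [h3, PsiHom_apply_block S c s⁻¹ (Finset.mem_range.mp ht)]
  rfl

lemma blockprod_eq' (hc : ∑ i, c i = n) (F : ℕ → ℕ → K) (ρ : S.W n) (s : ∀ i, S.W (c i)) :
    ∏ t ∈ Finset.range n, F t (((PsiHom S c s * ((ρ : Equiv.Perm ℕ))⁻¹))⁻¹ t)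
      = ∏ i, ∏ t ∈ Finset.range (c i),
          F (offset c i + t) ((ρ : Equiv.Perm ℕ) (offset c i + ((s i : Equiv.Perm ℕ))⁻¹ t)) := by
  have h1 : ∀ t, ((PsiHom S c s * ((ρ : Equiv.Perm ℕ))⁻¹))⁻¹ t
      = (ρ : Equiv.Perm ℕ) (PsiHom S c s⁻¹ t) := by
    intro t
    rw [mul_inv_rev, inv_inv, Equiv.Perm.mul_apply, map_inv]
  simp only [h1]
  rw [prod_blocks hc (fun u => F u ((ρ : Equiv.Perm ℕ) (PsiHom S c s⁻¹ u)))]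
  refine Finset.prod_congr rfl (fun i _ => Finset.prod_congr rfl (fun t ht => ?_))
  congr 2
  rw [PsiHom_apply_block S c s⁻¹ (Finset.mem_range.mp ht)]
  rfl

open Classical in
/-- CORE 2 : regrouping along `σ = ρ · Ψ(s)`. -/
lemma core2 (hc : ∑ i, c i = n) (μ : S.W n →* Kˣ) (μi : ∀ i, S.W (c i) →* Kˣ)
    (hμ : ∀ s : ∀ i, S.W (c i), μ ⟨PsiHom S c s, PsiHom_mem S hc s⟩ = ∏ i, μi i (s i))
    (F : ℕ → ℕ → K) :
    ∑ σ : S.W n, ((μ σ : Kˣ) : K) * ∏ t ∈ Finset.range n, F t (((σ : Equiv.Perm ℕ))⁻¹ t)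
      = ∑ ρ : S.W n, (if (ρ : Equiv.Perm ℕ) ∈ MinRepSet S n c then
          ((μ ρ : Kˣ) : K) * ∏ i, (∑ s : S.W (c i), ((μi i s : Kˣ) : K) *
            ∏ t ∈ Finset.range (c i),
              F ((ρ : Equiv.Perm ℕ) (offset c i + t)) (offset c i + ((s : Equiv.Perm ℕ))⁻¹ t))
          else 0) := by
  classical
  rw [core_regroup S hc
    (fun σ => ((μ σ : Kˣ) : K) * ∏ t ∈ Finset.range n, F t (((σ : Equiv.Perm ℕ))⁻¹ t))]
  apply Finset.sum_congr rfl
  intro ρ _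
  split_ifs with hM
  swap
  · rfl
  have key : ∀ s : ∀ i, S.W (c i),
      ((μ (ρ * ⟨PsiHom S c s, PsiHom_mem S hc s⟩) : Kˣ) : K) *
        ∏ t ∈ Finset.range n,
          F t ((((ρ * ⟨PsiHom S c s, PsiHom_mem S hc s⟩ : S.W n) : Equiv.Perm ℕ))⁻¹ t)
      = ((μ ρ : Kˣ) : K) * ∏ i, (((μi i (s i) : Kˣ) : K) *
          ∏ t ∈ Finset.range (c i),
            F ((ρ : Equiv.Perm ℕ) (offset c i + t)) (offset c i + ((s i : Equiv.Perm ℕ))⁻¹ t)) := by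
    intro s
    have hcoe : ((ρ * ⟨PsiHom S c s, PsiHom_mem S hc s⟩ : S.W n) : Equiv.Perm ℕ)
        = (ρ : Equiv.Perm ℕ) * PsiHom S c s := rfl
    rw [hcoe, blockprod_eq S hc F ρ s, map_mul, hμ s]
    push_cast
    rw [Finset.prod_mul_distrib]
    ring
  simp only [key]
  rw [← Finset.mul_sum]
  congr 1
  exact (Fintype.prod_sum (fun (i : Fin k) (s : S.W (c i)) => ((μi i s : Kˣ) : K) *
    ∏ t ∈ Finset.range (c i),
      F ((ρ : Equiv.Perm ℕ) (offset c i + t)) (offset c i + ((s : Equiv.Perm ℕ))⁻¹ t))).symm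

open Classical in
/-- CORE 1 : regrouping along `σ = Ψ(s) · ρ⁻¹`. -/
lemma core1 (hc : ∑ i, c i = n) (μ : S.W n →* Kˣ) (μi : ∀ i, S.W (c i) →* Kˣ)
    (hμ : ∀ s : ∀ i, S.W (c i), μ ⟨PsiHom S c s, PsiHom_mem S hc s⟩ = ∏ i, μi i (s i))
    (F : ℕ → ℕ → K) :
    ∑ σ : S.W n, ((μ σ : Kˣ) : K) * ∏ t ∈ Finset.range n, F t (((σ : Equiv.Perm ℕ))⁻¹ t)
      = ∑ ρ : S.W n, (if (ρ : Equiv.Perm ℕ) ∈ MinRepSet S n c then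
          (((μ ρ)⁻¹ : Kˣ) : K) * ∏ i, (∑ s : S.W (c i), ((μi i s : Kˣ) : K) *
            ∏ t ∈ Finset.range (c i),
              F (offset c i + t) ((ρ : Equiv.Perm ℕ) (offset c i + ((s : Equiv.Perm ℕ))⁻¹ t)))
          else 0) := by
  classical
  rw [core_regroup' S hc
    (fun σ => ((μ σ : Kˣ) : K) * ∏ t ∈ Finset.range n, F t (((σ : Equiv.Perm ℕ))⁻¹ t))]
  apply Finset.sum_congr rfl
  intro ρ _
  split_ifs with hM
  swap
  · rfl
  have key : ∀ s : ∀ i, S.W (c i),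
      ((μ (⟨PsiHom S c s, PsiHom_mem S hc s⟩ * ρ⁻¹) : Kˣ) : K) *
        ∏ t ∈ Finset.range n,
          F t ((((⟨PsiHom S c s, PsiHom_mem S hc s⟩ * ρ⁻¹ : S.W n) : Equiv.Perm ℕ))⁻¹ t)
      = (((μ ρ)⁻¹ : Kˣ) : K) * ∏ i, (((μi i (s i) : Kˣ) : K) *
          ∏ t ∈ Finset.range (c i),
            F (offset c i + t) ((ρ : Equiv.Perm ℕ) (offset c i + ((s i : Equiv.Perm ℕ))⁻¹ t))) := by
    intro s
    have hcoe : ((⟨PsiHom S c s, PsiHom_mem S hc s⟩ * ρ⁻¹ : S.W n) : Equiv.Perm ℕ)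
        = PsiHom S c s * ((ρ : Equiv.Perm ℕ))⁻¹ := rfl
    rw [hcoe, blockprod_eq' S hc F ρ s, map_mul, hμ s, map_inv]
    push_cast
    rw [Finset.prod_mul_distrib]
    ring
  simp only [key]
  rw [← Finset.mul_sum]
  congr 1
  exact (Fintype.prod_sum (fun (i : Fin k) (s : S.W (c i)) => ((μi i s : Kˣ) : K) *
    ∏ t ∈ Finset.range (c i),
      F (offset c i + t) ((ρ : Equiv.Perm ℕ) (offset c i + ((s : Equiv.Perm ℕ))⁻¹ t)))).symm

end Part6
section Part7

variable {K : Type*} [CommRing K] (S : OmegaSeq K)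
variable {E : Type*} [AddCommGroup E] [Module K E]

lemma pairVal_eq_sum (d : ℕ) (x : ℕ → E) (y : ℕ → Module.Dual K E) :
    pairVal S d x y = ∑ σ : S.W d, ((S.χ d σ : Kˣ) : K) *
      ∏ t ∈ Finset.range d, y t (x (((σ : Equiv.Perm ℕ))⁻¹ t)) :=
  finsum_eq_sum_of_fintype _

/-- the defining relation of the semi-symmetric power:
permuting the entries multiplies a decomposable by the inverse character value. -/
lemma elN_perm (d : ℕ) (σ : S.W d) (y : ℕ → E) :
    elN S d (fun t => y (((σ : Equiv.Perm ℕ))⁻¹ t))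
      = (((S.χ d σ)⁻¹ : Kˣ) : K) • elN S d y := by
  unfold elN decEl
  rw [← map_smul, ← Submodule.Quotient.mk_smul]
  congr 1
  have hten : (PiTensorProduct.tprod K (fun t : Fin d => y (((σ : Equiv.Perm ℕ))⁻¹ t.1)))
      = permAct K E d (rAct S d σ) (PiTensorProduct.tprod K (fun t : Fin d => y t.1)) := by
    unfold permAct
    rw [PiTensorProduct.reindex_tprod]
    exact congrArg _ (funext fun t => rfl)
  rw [Submodule.Quotient.eq, hten]
  have hgen : (((S.χ d σ)⁻¹ : Kˣ) : K) • (PiTensorProduct.tprod K (fun t : Fin d => y t.1))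
      - permAct K E d (rAct S d σ) (PiTensorProduct.tprod K (fun t : Fin d => y t.1))
      ∈ seqKer S E d :=
    Submodule.subset_span ⟨σ, _, rfl⟩
  have hneg := neg_mem hgen
  simpa using hneg

/-- Permuting the `y`-side of the pairing value multiplies by the character value. -/
lemma pairVal_ycomp (d : ℕ) (x : ℕ → E) (y : ℕ → Module.Dual K E) (σ : S.W d) :
    pairVal S d x (fun t => y (((σ : Equiv.Perm ℕ))⁻¹ t))
      = ((S.χ d σ : Kˣ) : K) * pairVal S d x y := by
  rw [pairVal_eq_sum, pairVal_eq_sum]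
  have step1 : ∀ τ : S.W d,
      ∏ t ∈ Finset.range d, y (((σ : Equiv.Perm ℕ))⁻¹ t) (x (((τ : Equiv.Perm ℕ))⁻¹ t))
        = ∏ u ∈ Finset.range d, y u (x ((((σ⁻¹ * τ : S.W d) : Equiv.Perm ℕ))⁻¹ u)) := by
    intro τ
    rw [← prod_range_perm
      (fun t => y (((σ : Equiv.Perm ℕ))⁻¹ t) (x (((τ : Equiv.Perm ℕ))⁻¹ t)))
      (S.W_le d σ.2)]
    refine Finset.prod_congr rfl (fun u _ => ?_)
    show y (((σ : Equiv.Perm ℕ))⁻¹ ((σ : Equiv.Perm ℕ) u))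
        (x (((τ : Equiv.Perm ℕ))⁻¹ ((σ : Equiv.Perm ℕ) u)))
      = y u (x ((((σ⁻¹ * τ : S.W d) : Equiv.Perm ℕ))⁻¹ u))
    have e1 : ((σ : Equiv.Perm ℕ))⁻¹ ((σ : Equiv.Perm ℕ) u) = u :=
      (fun (e : Equiv.Perm ℕ) m => e.symm_apply_apply m : ∀ (e : Equiv.Perm ℕ) (m : ℕ), e⁻¹ (e m) = m) _ _
    have e2 : ((τ : Equiv.Perm ℕ))⁻¹ ((σ : Equiv.Perm ℕ) u)
        = ((((σ⁻¹ * τ : S.W d) : Equiv.Perm ℕ))⁻¹ u) := by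
      show _ = ((((σ : Equiv.Perm ℕ))⁻¹ * (τ : Equiv.Perm ℕ)))⁻¹ u
      rw [mul_inv_rev, inv_inv, Equiv.Perm.mul_apply]
    rw [e1, e2]
  simp only [step1]
  rw [Finset.mul_sum]
  have hc2 : ((S.χ d σ : Kˣ) : K) * (((S.χ d σ)⁻¹ : Kˣ) : K) = 1 := by
    rw [← Units.val_mul, mul_inv_cancel, Units.val_one]
  refine Fintype.sum_bijective (fun τ : S.W d => σ⁻¹ * τ)
    (Group.mulLeft_bijective σ⁻¹) _ _ (fun τ => ?_)
  show ((S.χ d τ : Kˣ) : K) * ∏ u ∈ Finset.range d, y u (x ((((σ⁻¹ * τ : S.W d) : Equiv.Perm ℕ))⁻¹ u))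
      = ((S.χ d σ : Kˣ) : K) * (((S.χ d (σ⁻¹ * τ) : Kˣ) : K) *
          ∏ t ∈ Finset.range d, y t (x ((((σ⁻¹ * τ : S.W d) : Equiv.Perm ℕ))⁻¹ t)))
  rw [map_mul, map_inv, Units.val_mul]
  rw [show ((S.χ d σ : Kˣ) : K) * (((((S.χ d σ)⁻¹ : Kˣ) : K) * ((S.χ d τ : Kˣ) : K)) *
      ∏ t ∈ Finset.range d, y t (x ((((σ⁻¹ * τ : S.W d) : Equiv.Perm ℕ))⁻¹ t)))
    = (((S.χ d σ : Kˣ) : K) * (((S.χ d σ)⁻¹ : Kˣ) : K)) * (((S.χ d τ : Kˣ) : K) *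
      ∏ t ∈ Finset.range d, y t (x ((((σ⁻¹ * τ : S.W d) : Equiv.Perm ℕ))⁻¹ t))) from by ring]
  rw [hc2, one_mul]

lemma chi_sq_or {E : Type*} [AddCommGroup E] [Module K E] [IsDomain K]
    (B : SemiAlg S E →ₗ[K] SemiAlg S (Module.Dual K E) →ₗ[K] K)
    (hBdec : ∀ (d : ℕ) (x : ℕ → E) (y : ℕ → Module.Dual K E),
      B (elN S d x) (elN S d y) = pairVal S d x y)
    (d : ℕ) (σ : S.W d) :
    ((S.χ d σ : Kˣ) : K) * ((S.χ d σ : Kˣ) : K) = 1 ∨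
      (∀ (x : ℕ → E) (y : ℕ → Module.Dual K E), pairVal S d x y = 0) := by
  by_cases hz : ∀ (x : ℕ → E) (y : ℕ → Module.Dual K E), pairVal S d x y = 0
  · exact Or.inr hz
  · left
    push_neg at hz
    obtain ⟨x, y, hxy⟩ := hz
    have h1 : B (elN S d x) (elN S d (fun t => y (((σ : Equiv.Perm ℕ))⁻¹ t)))
        = ((S.χ d σ : Kˣ) : K) * pairVal S d x y := by
      rw [hBdec, pairVal_ycomp]
    have h2 : B (elN S d x) (elN S d (fun t => y (((σ : Equiv.Perm ℕ))⁻¹ t)))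
        = (((S.χ d σ)⁻¹ : Kˣ) : K) * pairVal S d x y := by
      rw [elN_perm, map_smul, hBdec]
      simp [smul_eq_mul]
    have h3 : (((S.χ d σ : Kˣ) : K) - (((S.χ d σ)⁻¹ : Kˣ) : K)) * pairVal S d x y = 0 := by
      rw [sub_mul, ← h1, ← h2, sub_self]
    rcases mul_eq_zero.mp h3 with h4 | h4
    · have h5 : ((S.χ d σ : Kˣ) : K) = (((S.χ d σ)⁻¹ : Kˣ) : K) := by
        have := sub_eq_zero.mp h4
        exact this
      calc ((S.χ d σ : Kˣ) : K) * ((S.χ d σ : Kˣ) : K)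
          = ((S.χ d σ : Kˣ) : K) * (((S.χ d σ)⁻¹ : Kˣ) : K) := by rw [← h5]
        _ = ((S.χ d σ * (S.χ d σ)⁻¹ : Kˣ) : K) := by push_cast; ring
        _ = 1 := by rw [mul_inv_cancel]; rfl
    · exact absurd h4 hxy

lemma exists_transpose [Module.Free K E] [Module.Finite K E]
    (x : ℕ → E) (y : ℕ → Module.Dual K E) :
    ∃ (x' : ℕ → E) (y' : ℕ → Module.Dual K E), ∀ s t, y' t (x' s) = y s (x t) := by
  classical
  set b := Module.Free.chooseBasis K E with hb
  refine ⟨fun s => ∑ j, (y s (b j)) • b j,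
    fun t => ∑ j, (b.repr (x t) j) • b.coord j, ?_⟩
  intro s t
  simp only [LinearMap.coe_sum, Finset.sum_apply, LinearMap.smul_apply, smul_eq_mul]
  have hcoord : ∀ j, b.coord j (∑ j', (y s (b j')) • b j') = y s (b j) := by
    intro j
    rw [map_sum]
    rw [Finset.sum_eq_single j]
    · simp [Module.Basis.coord_apply, Module.Basis.repr_self]
    · intro j' _ hj'
      simp [Module.Basis.coord_apply, Module.Basis.repr_self, Finsupp.single_apply, hj']
    · intro h; exact absurd (Finset.mem_univ j) h
  simp only [hcoord]
  have : ∑ j, b.repr (x t) j * y s (b j) = y s (∑ j, b.repr (x t) j • b j) := by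
    rw [map_sum]
    simp [smul_eq_mul]
  rw [this, Module.Basis.sum_repr]

lemma pairVal_swap (d : ℕ) {x : ℕ → E} {y : ℕ → Module.Dual K E}
    {x' : ℕ → E} {y' : ℕ → Module.Dual K E}
    (hsw : ∀ s t, y' t (x' s) = y s (x t)) :
    pairVal S d x' y' = ∑ σ : S.W d, (((S.χ d σ)⁻¹ : Kˣ) : K) *
      ∏ t ∈ Finset.range d, y t (x (((σ : Equiv.Perm ℕ))⁻¹ t)) := by
  rw [pairVal_eq_sum]
  refine Fintype.sum_bijective (fun σ : S.W d => σ⁻¹) (inv_involutive.bijective) _ _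
    (fun σ => ?_)
  show ((S.χ d σ : Kˣ) : K) * ∏ t ∈ Finset.range d, y' t (x' (((σ : Equiv.Perm ℕ))⁻¹ t))
      = (((S.χ d σ⁻¹)⁻¹ : Kˣ) : K) *
          ∏ t ∈ Finset.range d, y t (x ((((σ⁻¹ : S.W d) : Equiv.Perm ℕ))⁻¹ t))
  have hco : (((σ⁻¹ : S.W d) : Equiv.Perm ℕ))⁻¹ = (σ : Equiv.Perm ℕ) := by simp
  rw [map_inv, inv_inv, hco]
  congr 1
  have h1 : ∀ t, y' t (x' (((σ : Equiv.Perm ℕ))⁻¹ t)) = y (((σ : Equiv.Perm ℕ))⁻¹ t) (x t) :=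
    fun t => hsw _ _
  simp only [h1]
  have h2 := prod_range_perm (fun t => y (((σ : Equiv.Perm ℕ))⁻¹ t) (x t)) (S.W_le d σ.2)
  rw [← h2]
  refine Finset.prod_congr rfl (fun u _ => ?_)
  show y (((σ : Equiv.Perm ℕ))⁻¹ ((σ : Equiv.Perm ℕ) u)) (x ((σ : Equiv.Perm ℕ) u))
      = y u (x ((σ : Equiv.Perm ℕ) u))
  rw [Equiv.Perm.inv_def (σ : Equiv.Perm ℕ), Equiv.symm_apply_apply]

end Part7
section Part8

variable {K : Type*} [CommRing K]

/-- the inverse character, as a monoid homomorphism. -/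
def chiInv (S : OmegaSeq K) (d : ℕ) : S.W d →* Kˣ where
  toFun σ := (S.χ d σ)⁻¹
  map_one' := by simp
  map_mul' a b := by
    show ((S.χ d) (a * b))⁻¹ = ((S.χ d) a)⁻¹ * ((S.χ d) b)⁻¹
    rw [map_mul, mul_inv]

lemma chiInv_compat (S : OmegaSeq K) {k n : ℕ} {c : Fin k → ℕ} (hc : ∑ i, c i = n)
    (s : ∀ i, S.W (c i)) :
    chiInv S n ⟨PsiHom S c s, PsiHom_mem S hc s⟩ = ∏ i, chiInv S (c i) (s i) := by
  show (S.χ n ⟨PsiHom S c s, PsiHom_mem S hc s⟩)⁻¹ = _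
  rw [chi_PsiHom S hc s]
  rw [← Finset.prod_inv_distrib]
  rfl

lemma unit_inv_coe_eq {u : Kˣ} (h : ((u : K) * (u : K) = 1)) : ((u⁻¹ : Kˣ) : K) = (u : K) := by
  have h2 : u * u = 1 := by
    apply Units.ext
    push_cast
    exact h
  have h3 : u⁻¹ = u := inv_eq_of_mul_eq_one_left h2
  rw [h3]

end Part8
open Classical in
/-- Proposition III.18, Laplace expansions of the canonical
bilinear form. For `n = n₁ + ⋯ + n_k`:
`⟨x₁χ⋯χxₙ, x₁*χ⋯χxₙ*⟩ = Σ_{ρ ∈ M(χ;n;n₁,…,n_k)} χₙ(ρ) ∏_i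
⟨x_{ρ(m_{i−1}+1)}χ⋯χx_{ρ(m_i)}, x_{m_{i−1}+1}*χ⋯χx_{m_i}*⟩`, and the
symmetric expansion with `ρ` acting on the second factors. -/
theorem pairing_laplace {K : Type*} [CommRing K] [Algebra ℚ K] [IsDomain K]
    (S : OmegaSeq K) {E : Type*} [AddCommGroup E] [Module K E]
    [Module.Free K E] [Module.Finite K E]
    (B : SemiAlg S E →ₗ[K] SemiAlg S (Module.Dual K E) →ₗ[K] K)
    (hBorth : ∀ r s : ℕ, r ≠ s →
      ∀ (ξ : Qpow S E r) (η : Qpow S (Module.Dual K E) s),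
        B (DirectSum.lof K ℕ (fun d => Qpow S E d) r ξ)
          (DirectSum.lof K ℕ (fun d => Qpow S (Module.Dual K E) d) s η) = 0)
    (hBdec : ∀ (d : ℕ) (x : ℕ → E) (y : ℕ → Module.Dual K E),
      B (elN S d x) (elN S d y) = pairVal S d x y)
    {k : ℕ} (n : ℕ) (c : Fin k → ℕ) (hc : ∑ i, c i = n)
    (x : ℕ → E) (y : ℕ → Module.Dual K E) :
    B (elN S n x) (elN S n y)
      = (∑ᶠ ρ : S.W n, if (ρ : Equiv.Perm ℕ) ∈ MinRepSet S n c then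
          ((S.χ n ρ : Kˣ) : K) *
            ∏ i, B (elN S (c i) (fun t => x ((ρ : Equiv.Perm ℕ) (offset c i + t))))
                   (elN S (c i) (fun t => y (offset c i + t)))
        else 0) ∧
    B (elN S n x) (elN S n y)
      = (∑ᶠ ρ : S.W n, if (ρ : Equiv.Perm ℕ) ∈ MinRepSet S n c then
          ((S.χ n ρ : Kˣ) : K) *
            ∏ i, B (elN S (c i) (fun t => x (offset c i + t)))
                   (elN S (c i) (fun t => y ((ρ : Equiv.Perm ℕ) (offset c i + t))))
        else 0) := by
  classical
  -- beta-reduced core identities with F t u := y t (x u)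
  have hμ : ∀ s : ∀ i, S.W (c i),
      S.χ n ⟨PsiHom S c s, PsiHom_mem S hc s⟩ = ∏ i, S.χ (c i) (s i) := chi_PsiHom S hc
  have hcore1 := core1 S hc (S.χ n) (fun i => S.χ (c i)) hμ (fun t u => y t (x u))
  have hcore1t := core1 S hc (chiInv S n) (fun i => chiInv S (c i)) (chiInv_compat S hc)
    (fun t u => y t (x u))
  have hcore2 := core2 S hc (S.χ n) (fun i => S.χ (c i)) hμ (fun t u => y t (x u))
  -- identification of the left-hand side
  have hLHS : B (elN S n x) (elN S n y)
      = ∑ σ : S.W n, ((S.χ n σ : Kˣ) : K) *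
          ∏ t ∈ Finset.range n, y t (x (((σ : Equiv.Perm ℕ))⁻¹ t)) := by
    rw [hBdec, pairVal_eq_sum]
  -- identification of the first right-hand side
  have hRHS1 : (∑ᶠ ρ : S.W n, if (ρ : Equiv.Perm ℕ) ∈ MinRepSet S n c then
        ((S.χ n ρ : Kˣ) : K) *
          ∏ i, B (elN S (c i) (fun t => x ((ρ : Equiv.Perm ℕ) (offset c i + t))))
                 (elN S (c i) (fun t => y (offset c i + t)))
      else 0)
      = ∑ ρ : S.W n, (if (ρ : Equiv.Perm ℕ) ∈ MinRepSet S n c then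
          ((S.χ n ρ : Kˣ) : K) * ∏ i, (∑ s : S.W (c i), ((S.χ (c i) s : Kˣ) : K) *
            ∏ t ∈ Finset.range (c i),
              y (offset c i + t) (x ((ρ : Equiv.Perm ℕ)
                (offset c i + ((s : Equiv.Perm ℕ))⁻¹ t)))) else 0) := by
    rw [finsum_eq_sum_of_fintype]
    refine Finset.sum_congr rfl (fun ρ _ => ?_)
    split_ifs with hM
    · congr 1
      refine Finset.prod_congr rfl (fun i _ => ?_)
      rw [hBdec, pairVal_eq_sum]
    · rfl
  -- identification of the second right-hand side
  have hRHS2 : (∑ᶠ ρ : S.W n, if (ρ : Equiv.Perm ℕ) ∈ MinRepSet S n c then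
        ((S.χ n ρ : Kˣ) : K) *
          ∏ i, B (elN S (c i) (fun t => x (offset c i + t)))
                 (elN S (c i) (fun t => y ((ρ : Equiv.Perm ℕ) (offset c i + t))))
      else 0)
      = ∑ ρ : S.W n, (if (ρ : Equiv.Perm ℕ) ∈ MinRepSet S n c then
          ((S.χ n ρ : Kˣ) : K) * ∏ i, (∑ s : S.W (c i), ((S.χ (c i) s : Kˣ) : K) *
            ∏ t ∈ Finset.range (c i),
              y ((ρ : Equiv.Perm ℕ) (offset c i + t))
                (x (offset c i + ((s : Equiv.Perm ℕ))⁻¹ t))) else 0) := by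
    rw [finsum_eq_sum_of_fintype]
    refine Finset.sum_congr rfl (fun ρ _ => ?_)
    split_ifs with hM
    · congr 1
      refine Finset.prod_congr rfl (fun i _ => ?_)
      rw [hBdec, pairVal_eq_sum]
    · rfl
  have stmt2 : B (elN S n x) (elN S n y)
      = (∑ᶠ ρ : S.W n, if (ρ : Equiv.Perm ℕ) ∈ MinRepSet S n c then
          ((S.χ n ρ : Kˣ) : K) *
            ∏ i, B (elN S (c i) (fun t => x (offset c i + t)))
                   (elN S (c i) (fun t => y ((ρ : Equiv.Perm ℕ) (offset c i + t))))
        else 0) := by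
    rw [hRHS2, hLHS, hcore2]
  refine ⟨?_, stmt2⟩
  -- Statement 1
  by_cases hQ : ∀ (i : Fin k) (s : S.W (c i)),
      ((S.χ (c i) s : Kˣ) : K) * ((S.χ (c i) s : Kˣ) : K) = 1
  · -- all block characters are involutive
    have hblock : ∀ (i : Fin k) (s : S.W (c i)),
        (((S.χ (c i) s)⁻¹ : Kˣ) : K) = ((S.χ (c i) s : Kˣ) : K) :=
      fun i s => unit_inv_coe_eq (hQ i s)
    by_cases hA : ∀ σ : S.W n, ((S.χ n σ : Kˣ) : K) * ((S.χ n σ : Kˣ) : K) = 1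
    · -- the fully involutive case : coefficients match term by term
      rw [hRHS1, hLHS, hcore1]
      refine Finset.sum_congr rfl (fun ρ _ => ?_)
      split_ifs with hM
      · rw [unit_inv_coe_eq (hA ρ)]
      · rfl
    · -- a character value of square ≠ 1 exists in degree n : the pairing vanishes
      push_neg at hA
      obtain ⟨σ₀, hσ₀⟩ := hA
      have hzero : ∀ (x' : ℕ → E) (y' : ℕ → Module.Dual K E), pairVal S n x' y' = 0 :=
        (chi_sq_or S B hBdec n σ₀).resolve_left hσ₀
      have hL0 : B (elN S n x) (elN S n y) = 0 := by
        rw [hBdec, hzero]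
      rw [hL0, hRHS1]
      -- rewrite blocks with inverse characters, then recognize the transposed pairing
      have hswap : ∑ ρ : S.W n, (if (ρ : Equiv.Perm ℕ) ∈ MinRepSet S n c then
          ((S.χ n ρ : Kˣ) : K) * ∏ i, (∑ s : S.W (c i), ((S.χ (c i) s : Kˣ) : K) *
            ∏ t ∈ Finset.range (c i),
              y (offset c i + t) (x ((ρ : Equiv.Perm ℕ)
                (offset c i + ((s : Equiv.Perm ℕ))⁻¹ t)))) else 0)
          = ∑ ρ : S.W n, (if (ρ : Equiv.Perm ℕ) ∈ MinRepSet S n c then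
          (((chiInv S n ρ)⁻¹ : Kˣ) : K) * ∏ i, (∑ s : S.W (c i), ((chiInv S (c i) s : Kˣ) : K) *
            ∏ t ∈ Finset.range (c i),
              y (offset c i + t) (x ((ρ : Equiv.Perm ℕ)
                (offset c i + ((s : Equiv.Perm ℕ))⁻¹ t)))) else 0) := by
        refine Finset.sum_congr rfl (fun ρ _ => ?_)
        split_ifs with hM
        · have hcoeff : (((chiInv S n ρ)⁻¹ : Kˣ) : K) = ((S.χ n ρ : Kˣ) : K) := by
            show (((S.χ n ρ)⁻¹⁻¹ : Kˣ) : K) = _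
            rw [inv_inv]
          rw [hcoeff]
          congr 1
          refine Finset.prod_congr rfl (fun i _ => ?_)
          refine Finset.sum_congr rfl (fun s _ => ?_)
          have : ((chiInv S (c i) s : Kˣ) : K) = ((S.χ (c i) s : Kˣ) : K) := hblock i s
          rw [this]
        · rfl
      rw [hswap, ← hcore1t]
      obtain ⟨x', y', hsw⟩ := exists_transpose x y
      have hps := pairVal_swap S n (x := x) (y := y) hsw
      have : ∑ σ : S.W n, ((chiInv S n σ : Kˣ) : K) *
          ∏ t ∈ Finset.range n, y t (x (((σ : Equiv.Perm ℕ))⁻¹ t))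
          = pairVal S n x' y' := by
        rw [hps]
        rfl
      rw [this, hzero]
  · -- some block character has square ≠ 1 : both sides vanish
    push_neg at hQ
    obtain ⟨i₀, s₀, hs₀⟩ := hQ
    have hzero : ∀ (x' : ℕ → E) (y' : ℕ → Module.Dual K E), pairVal S (c i₀) x' y' = 0 :=
      (chi_sq_or S B hBdec (c i₀) s₀).resolve_left hs₀
    have hinner0 : ∀ ρ : S.W n,
        (∑ s : S.W (c i₀), ((S.χ (c i₀) s : Kˣ) : K) *
          ∏ t ∈ Finset.range (c i₀),
            y (offset c i₀ + t) (x ((ρ : Equiv.Perm ℕ)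
              (offset c i₀ + ((s : Equiv.Perm ℕ))⁻¹ t)))) = 0 := by
      intro ρ
      rw [← pairVal_eq_sum S (c i₀) (fun t => x ((ρ : Equiv.Perm ℕ) (offset c i₀ + t)))
        (fun t => y (offset c i₀ + t))]
      exact hzero _ _
    have hR0 : ∑ ρ : S.W n, (if (ρ : Equiv.Perm ℕ) ∈ MinRepSet S n c then
          ((S.χ n ρ : Kˣ) : K) * ∏ i, (∑ s : S.W (c i), ((S.χ (c i) s : Kˣ) : K) *
            ∏ t ∈ Finset.range (c i),
              y (offset c i + t) (x ((ρ : Equiv.Perm ℕ)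
                (offset c i + ((s : Equiv.Perm ℕ))⁻¹ t)))) else 0) = 0 := by
      refine Finset.sum_eq_zero (fun ρ _ => ?_)
      split_ifs with hM
      · rw [Finset.prod_eq_zero (Finset.mem_univ i₀) (hinner0 ρ), mul_zero]
      · rfl
    have hL0 : ∑ ρ : S.W n, (if (ρ : Equiv.Perm ℕ) ∈ MinRepSet S n c then
          (((S.χ n ρ)⁻¹ : Kˣ) : K) * ∏ i, (∑ s : S.W (c i), ((S.χ (c i) s : Kˣ) : K) *
            ∏ t ∈ Finset.range (c i),
              y (offset c i + t) (x ((ρ : Equiv.Perm ℕ)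
                (offset c i + ((s : Equiv.Perm ℕ))⁻¹ t)))) else 0) = 0 := by
      refine Finset.sum_eq_zero (fun ρ _ => ?_)
      split_ifs with hM
      · rw [Finset.prod_eq_zero (Finset.mem_univ i₀) (hinner0 ρ), mul_zero]
      · rfl
    rw [hRHS1, hR0, hLHS, hcore1, hL0]
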